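/- For an elementary existential doctrine P, the assignment sending an object A of C to (A, δ_A) and an arrow f : A → B to the element ∃_{⟨id_A,f⟩}(⊤_A) ∈ P(A×B) defines a functor D : C → E_P into the subcategory E_P of T_P on P-equivalence relations; moreover ∃_{⟨id_A,f⟩}(⊤_A) = P_{f×id_B}(δ_B). -/

import Mathlib

open CategoryTheory CategoryTheory.Limits

universe u v w

/-- Layer 0: an indexed family of inf-semilattices over a category. -/
structure DocL0 (C : Type u) [Category.{v} C] where
  obj : C → Type w
  semi : ∀ A : C, SemilatticeInf (obj A)

attribute [instance] DocL0.semi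

/-- Layer 1: fibrewise top elements. -/
structure DocL1 (C : Type u) [Category.{v} C] extends DocL0.{u, v, w} C where
  otop : ∀ A : C, OrderTop (obj A)

attribute [instance] DocL1.otop

/-- A doctrine: an indexed inf-semilattice `P : Cᵒᵖ → InfSL`. -/
structure Doctrine (C : Type u) [Category.{v} C] extends DocL1.{u, v, w} C where
  map : ∀ {A B : C}, (A ⟶ B) → obj B → obj A
  map_id : ∀ (A : C) (x : obj A), map (𝟙 A) x = x
  map_comp : ∀ {A B D : C} (f : A ⟶ B) (g : B ⟶ D) (x : obj D),
    map (f ≫ g) x = map f (map g x)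
  map_mono : ∀ {A B : C} (f : A ⟶ B), Monotone (map f)
  map_inf : ∀ {A B : C} (f : A ⟶ B) (x y : obj B),
    map f (x ⊓ y) = map f x ⊓ map f y
  map_top : ∀ {A B : C} (f : A ⟶ B), map f (⊤ : obj B) = (⊤ : obj A)

/-- An elementary existential doctrine. -/
structure EED (C : Type u) [Category.{v} C] [HasBinaryProducts C] extends
    Doctrine.{u, v, w} C where
  delta : ∀ A : C, obj (A ⨯ A)
  elem_i : ∀ {A : C} (α : obj A) (β : obj (A ⨯ A)),
    map prod.fst α ⊓ delta A ≤ β ↔ α ≤ map (diag A) β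
  elem_ii : ∀ {X A : C} (α : obj (X ⨯ A)) (β : obj ((X ⨯ A) ⨯ A)),
    map prod.fst α ⊓ map (prod.lift (prod.fst ≫ prod.snd) prod.snd) (delta A) ≤ β ↔
      α ≤ map (prod.lift (𝟙 (X ⨯ A)) prod.snd) β
  ex : ∀ {A B : C}, (A ⟶ B) → obj A → obj B
  ex_adj : ∀ {A B : C} (f : A ⟶ B) (α : obj A) (β : obj B),
    ex f α ≤ β ↔ α ≤ map f β
  frobenius : ∀ {A B : C} (f : A ⟶ B) (α : obj B) (β : obj A),
    ex f (map f α ⊓ β) = α ⊓ ex f β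
  beck_chevalley : ∀ {A A' B : C} (f : A' ⟶ A) (β : obj (A ⨯ B)),
    ex prod.fst (map (prod.map f (𝟙 B)) β) = map f (ex prod.fst β)

namespace EED

variable {C : Type u} [Category.{v} C] [HasBinaryProducts C] (P : EED.{u, v, w} C)

/-- Relational composition `∃_{p₂}(P_{⟨p₁,p₂⟩}(θ) ∧ P_{⟨p₂,p₃⟩}(ζ))`. -/
noncomputable def comp {A B D : C} (θ : P.obj (A ⨯ B)) (ζ : P.obj (B ⨯ D)) : P.obj (A ⨯ D) :=
  P.ex (prod.lift (prod.fst ≫ prod.fst) prod.snd)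
    (P.map prod.fst θ ⊓ P.map (prod.lift (prod.fst ≫ prod.snd) prod.snd) ζ)

/-- Opposite relation `P_{⟨p₂,p₁⟩}(θ)`. -/
noncomputable def op {A B : C} (θ : P.obj (A ⨯ B)) : P.obj (B ⨯ A) :=
  P.map (prod.lift prod.snd prod.fst) θ

/-- `ρ ≤ P_{⟨p₂,p₁⟩}(ρ)`. -/
def SymmRel {A : C} (ρ : P.obj (A ⨯ A)) : Prop :=
  ρ ≤ P.map (prod.lift prod.snd prod.fst) ρ

/-- `P_{⟨p₁,p₂⟩}(ρ) ∧ P_{⟨p₂,p₃⟩}(ρ) ≤ P_{⟨p₁,p₃⟩}(ρ)` in `P((A×A)×A)`. -/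
def TransRel {A : C} (ρ : P.obj (A ⨯ A)) : Prop :=
  P.map prod.fst ρ ⊓ P.map (prod.lift (prod.fst ≫ prod.snd) prod.snd) ρ ≤
    P.map (prod.lift (prod.fst ≫ prod.fst) prod.snd) ρ

/-- `δ_A ≤ ρ`. -/
def ReflRel {A : C} (ρ : P.obj (A ⨯ A)) : Prop := P.delta A ≤ ρ

/-- A `P`-equivalence relation. -/
def EqRel {A : C} (ρ : P.obj (A ⨯ A)) : Prop :=
  P.ReflRel ρ ∧ P.SymmRel ρ ∧ P.TransRel ρ

/-- Conditions (i)–(v) for an arrow `φ : ⟨A,ρ⟩ → ⟨B,σ⟩` of the exact completion `T_P`. -/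
def IsArrow {A B : C} (ρ : P.obj (A ⨯ A)) (σ : P.obj (B ⨯ B)) (φ : P.obj (A ⨯ B)) : Prop :=
  (φ ≤ P.map (prod.lift prod.fst prod.fst) ρ ⊓ P.map (prod.lift prod.snd prod.snd) σ) ∧
  (P.map prod.fst ρ ⊓ P.map (prod.lift (prod.fst ≫ prod.snd) prod.snd) φ ≤
      P.map (prod.lift (prod.fst ≫ prod.fst) prod.snd) φ) ∧
  (P.map prod.fst φ ⊓ P.map (prod.lift (prod.fst ≫ prod.snd) prod.snd) σ ≤
      P.map (prod.lift (prod.fst ≫ prod.fst) prod.snd) φ) ∧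
  (P.map prod.fst φ ⊓ P.map (prod.lift (prod.fst ≫ prod.fst) prod.snd) φ ≤
      P.map (prod.lift (prod.fst ≫ prod.snd) prod.snd) σ) ∧
  (P.map (diag A) ρ ≤ P.ex prod.fst φ)

/-- The graph relation `L[f] = ∃_{p₂}(P_{⟨p₁,p₂⟩}(ρ) ∧ P_{⟨f∘p₂,p₃⟩}(σ))` in `P(A×B)`. -/
noncomputable def Lrel {A B : C} (f : A ⟶ B) (ρ : P.obj (A ⨯ A)) (σ : P.obj (B ⨯ B)) : P.obj (A ⨯ B) :=
  P.ex (prod.lift (prod.fst ≫ prod.fst) prod.snd)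
    (P.map prod.fst ρ ⊓ P.map (prod.lift (prod.fst ≫ prod.snd ≫ f) prod.snd) σ)

/-! ### Auxiliary lemmas -/

lemma map_map {A B D : C} (m : A ⟶ B) (k : B ⟶ D) (x : P.obj D) :
    P.map m (P.map k x) = P.map (m ≫ k) x := (P.map_comp m k x).symm

lemma map_congr {A B : C} {f g : A ⟶ B} (e : f = g) (x : P.obj B) :
    P.map f x = P.map g x := by rw [e]

lemma ex_le {A B : C} (f : A ⟶ B) {α : P.obj A} {β : P.obj B}
    (h : α ≤ P.map f β) : P.ex f α ≤ β := (P.ex_adj f α β).mpr h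

lemma le_map_ex {A B : C} (f : A ⟶ B) (α : P.obj A) :
    α ≤ P.map f (P.ex f α) := (P.ex_adj f α _).mp le_rfl

lemma ex_mono {A B : C} (f : A ⟶ B) : Monotone (P.ex f) := fun a b h =>
  P.ex_le f (h.trans (P.le_map_ex f b))

lemma ex_id {A : C} (α : P.obj A) : P.ex (𝟙 A) α = α := by
  apply le_antisymm
  · exact P.ex_le _ (by rw [P.map_id])
  · have := P.le_map_ex (𝟙 A) α
    rwa [P.map_id] at this

lemma ex_comp_eq {A B D : C} (f : A ⟶ B) (g : B ⟶ D) (α : P.obj A) :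
    P.ex (f ≫ g) α = P.ex g (P.ex f α) := by
  apply le_antisymm
  · refine P.ex_le _ ?_
    rw [P.map_comp]
    exact (P.le_map_ex f α).trans (P.map_mono f (P.le_map_ex g _))
  · refine P.ex_le _ (P.ex_le _ ?_)
    rw [P.map_map]
    exact P.le_map_ex _ α

lemma top_le_diag (A : C) : (⊤ : P.obj A) ≤ P.map (diag A) (P.delta A) :=
  (P.elem_i ⊤ (P.delta A)).mp inf_le_right

lemma top_le_comp_diag {Z A : C} (h : Z ⟶ A) :
    (⊤ : P.obj Z) ≤ P.map (h ≫ diag A) (P.delta A) := by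
  rw [P.map_comp]
  calc (⊤ : P.obj Z) = P.map h ⊤ := (P.map_top h).symm
    _ ≤ _ := P.map_mono h (P.top_le_diag A)

lemma delta_le {A : C} {β : P.obj (A ⨯ A)} (h : ⊤ ≤ P.map (diag A) β) :
    P.delta A ≤ β := by
  have := (P.elem_i (⊤ : P.obj A) β).mpr h
  rwa [P.map_top, top_inf_eq] at this

/-- Transport along `δ`: `θ(x,a) ∧ a = a' → θ(x,a')`. -/
lemma transport {X A : C} (θ : P.obj (X ⨯ A)) :
    P.map prod.fst θ ⊓ P.map (prod.lift (prod.fst ≫ prod.snd) prod.snd) (P.delta A) ≤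
      P.map (prod.lift (prod.fst ≫ prod.fst) prod.snd) θ := by
  refine (P.elem_ii θ _).mpr ?_
  rw [P.map_map]
  have e : prod.lift (𝟙 (X ⨯ A)) prod.snd ≫ prod.lift (prod.fst ≫ prod.fst) prod.snd
      = 𝟙 (X ⨯ A) := by ext <;> simp [prod.lift_fst, prod.lift_snd, prod.lift_fst_assoc, prod.lift_snd_assoc]
  rw [e, P.map_id]

lemma delta_congr {A B : C} (f : A ⟶ B) :
    P.delta A ≤ P.map (prod.map f f) (P.delta B) := by
  refine P.delta_le ?_
  rw [P.map_map]
  have e : diag A ≫ prod.map f f = f ≫ diag B := by ext <;> simp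
  rw [e]
  exact P.top_le_comp_diag f

lemma delta_symm (A : C) : P.SymmRel (P.delta A) := by
  refine P.delta_le ?_
  rw [P.map_map]
  have e : diag A ≫ prod.lift prod.snd prod.fst = diag A := by ext <;> simp [prod.lift_fst, prod.lift_snd, prod.lift_fst_assoc, prod.lift_snd_assoc]
  rw [e]
  exact P.top_le_diag A

lemma delta_trans (A : C) : P.TransRel (P.delta A) := P.transport (P.delta A)

lemma delta_eqRel (A : C) : P.EqRel (P.delta A) :=
  ⟨le_rfl, P.delta_symm A, P.delta_trans A⟩

/-- Statement: `∃_{⟨id,f⟩}(⊤) = P_{f×id}(δ_B)`. -/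
lemma graph_eq {A B : C} (f : A ⟶ B) :
    P.ex (prod.lift (𝟙 A) f) (⊤ : P.obj A) = P.map (prod.map f (𝟙 B)) (P.delta B) := by
  apply le_antisymm
  · refine P.ex_le _ ?_
    rw [P.map_map]
    have e : prod.lift (𝟙 A) f ≫ prod.map f (𝟙 B) = f ≫ diag B := by ext <;> simp
    rw [e]
    exact P.top_le_comp_diag f
  · set γ := P.ex (prod.lift (𝟙 A) f) (⊤ : P.obj A) with hγ
    set m : A ⨯ B ⟶ (A ⨯ B) ⨯ B :=
      prod.lift (prod.lift prod.fst (prod.fst ≫ f)) prod.snd with hm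
    have h := P.map_mono m (P.transport γ)
    rw [P.map_inf, P.map_map, P.map_map, P.map_map] at h
    have c1 : P.map (m ≫ (prod.fst : (A ⨯ B) ⨯ B ⟶ A ⨯ B)) γ
        = P.map prod.fst (P.map (prod.lift (𝟙 A) f) γ) := by
      rw [P.map_map]
      exact P.map_congr (by rw [hm]; ext <;> simp [prod.lift_fst, prod.lift_snd, prod.lift_fst_assoc, prod.lift_snd_assoc]) γ
    have c2 : P.map (m ≫ prod.lift ((prod.fst : (A ⨯ B) ⨯ B ⟶ A ⨯ B) ≫ prod.snd) prod.snd)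
        (P.delta B) = P.map (prod.map f (𝟙 B)) (P.delta B) :=
      P.map_congr (by rw [hm]; ext <;> simp [prod.lift_fst, prod.lift_snd, prod.lift_fst_assoc, prod.lift_snd_assoc]) _
    have c3 : P.map (m ≫ prod.lift ((prod.fst : (A ⨯ B) ⨯ B ⟶ A ⨯ B) ≫ prod.fst) prod.snd) γ
        = γ := by
      have e : m ≫ prod.lift ((prod.fst : (A ⨯ B) ⨯ B ⟶ A ⨯ B) ≫ prod.fst) prod.snd
          = 𝟙 (A ⨯ B) := by rw [hm]; ext <;> simp [prod.lift_fst, prod.lift_snd, prod.lift_fst_assoc, prod.lift_snd_assoc]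
      rw [e, P.map_id]
    rw [c1, c2, c3] at h
    refine le_trans (le_inf ?_ le_rfl) h
    calc P.map (prod.map f (𝟙 B)) (P.delta B) ≤ ⊤ := le_top
      _ = P.map (prod.fst : A ⨯ B ⟶ A) (⊤ : P.obj A) := (P.map_top _).symm
      _ ≤ P.map prod.fst (P.map (prod.lift (𝟙 A) f) γ) := P.map_mono _ (P.le_map_ex _ _)

/-- Euclidean property of `δ`: `δ(x,y) ∧ δ(x,z) → δ(y,z)`. -/
lemma delta_euclid (B : C) :
    P.map prod.fst (P.delta B) ⊓ P.map (prod.lift (prod.fst ≫ prod.fst) prod.snd) (P.delta B) ≤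
      P.map (prod.lift (prod.fst ≫ prod.snd) prod.snd) (P.delta B) := by
  set m : (B ⨯ B) ⨯ B ⟶ (B ⨯ B) ⨯ B :=
    prod.lift (prod.lift (prod.fst ≫ prod.snd) (prod.fst ≫ prod.fst)) prod.snd with hm
  have h := P.map_mono m (P.delta_trans B)
  rw [P.map_inf, P.map_map, P.map_map, P.map_map] at h
  have c1 : P.map (m ≫ (prod.fst : (B ⨯ B) ⨯ B ⟶ B ⨯ B)) (P.delta B)
      = P.map prod.fst (P.map (prod.lift prod.snd prod.fst) (P.delta B)) := by
    rw [P.map_map]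
    exact P.map_congr (by rw [hm]; ext <;> simp [prod.lift_fst, prod.lift_snd, prod.lift_fst_assoc, prod.lift_snd_assoc]) _
  have c2 : P.map (m ≫ prod.lift ((prod.fst : (B ⨯ B) ⨯ B ⟶ B ⨯ B) ≫ prod.snd) prod.snd)
      (P.delta B) = P.map (prod.lift (prod.fst ≫ prod.fst) prod.snd) (P.delta B) :=
    P.map_congr (by rw [hm]; ext <;> simp [prod.lift_fst, prod.lift_snd, prod.lift_fst_assoc, prod.lift_snd_assoc]) _
  have c3 : P.map (m ≫ prod.lift ((prod.fst : (B ⨯ B) ⨯ B ⟶ B ⨯ B) ≫ prod.fst) prod.snd)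
      (P.delta B) = P.map (prod.lift (prod.fst ≫ prod.snd) prod.snd) (P.delta B) :=
    P.map_congr (by rw [hm]; ext <;> simp [prod.lift_fst, prod.lift_snd, prod.lift_fst_assoc, prod.lift_snd_assoc]) _
  rw [c1, c2, c3] at h
  exact le_trans (inf_le_inf_right _ (P.map_mono prod.fst (P.delta_symm B))) h

lemma graph_isArrow {A B : C} (f : A ⟶ B) :
    P.IsArrow (P.delta A) (P.delta B) (P.ex (prod.lift (𝟙 A) f) (⊤ : P.obj A)) := by
  rw [P.graph_eq f]
  refine ⟨?_, ?_, ?_, ?_, ?_⟩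
  · refine le_inf ?_ ?_
    · have e : (prod.lift prod.fst prod.fst : A ⨯ B ⟶ A ⨯ A) = prod.fst ≫ diag A := by
        ext <;> simp
      rw [e]
      exact le_top.trans (P.top_le_comp_diag prod.fst)
    · have e : (prod.lift prod.snd prod.snd : A ⨯ B ⟶ B ⨯ B) = prod.snd ≫ diag B := by
        ext <;> simp
      rw [e]
      exact le_top.trans (P.top_le_comp_diag prod.snd)
  · -- (ii): pull back transitivity of `δ_B` along `(f×f)×1`
    set m : (A ⨯ A) ⨯ B ⟶ (B ⨯ B) ⨯ B := prod.map (prod.map f f) (𝟙 B) with hm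
    have h := P.map_mono m (P.delta_trans B)
    rw [P.map_inf, P.map_map, P.map_map, P.map_map] at h
    have c1 : P.map (m ≫ (prod.fst : (B ⨯ B) ⨯ B ⟶ B ⨯ B)) (P.delta B)
        = P.map prod.fst (P.map (prod.map f f) (P.delta B)) := by
      rw [P.map_map]
      exact P.map_congr (by rw [hm]; ext <;> simp) _
    have c2 : P.map (m ≫ prod.lift ((prod.fst : (B ⨯ B) ⨯ B ⟶ B ⨯ B) ≫ prod.snd) prod.snd)
        (P.delta B)
        = P.map (prod.lift (prod.fst ≫ prod.snd) prod.snd)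
            (P.map (prod.map f (𝟙 B)) (P.delta B)) := by
      rw [P.map_map]
      exact P.map_congr (by rw [hm]; ext <;> simp) _
    have c3 : P.map (m ≫ prod.lift ((prod.fst : (B ⨯ B) ⨯ B ⟶ B ⨯ B) ≫ prod.fst) prod.snd)
        (P.delta B)
        = P.map (prod.lift (prod.fst ≫ prod.fst) prod.snd)
            (P.map (prod.map f (𝟙 B)) (P.delta B)) := by
      rw [P.map_map]
      exact P.map_congr (by rw [hm]; ext <;> simp) _
    rw [c1, c2, c3] at h
    exact le_trans (inf_le_inf_right _ (P.map_mono prod.fst (P.delta_congr f))) h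
  · exact P.transport _
  · -- (iv): pull back the euclidean property of `δ_B` along `(f×1)×1`
    set m : (A ⨯ B) ⨯ B ⟶ (B ⨯ B) ⨯ B := prod.map (prod.map f (𝟙 B)) (𝟙 B) with hm
    have h := P.map_mono m (P.delta_euclid B)
    rw [P.map_inf, P.map_map, P.map_map, P.map_map] at h
    have c1 : P.map (m ≫ (prod.fst : (B ⨯ B) ⨯ B ⟶ B ⨯ B)) (P.delta B)
        = P.map prod.fst (P.map (prod.map f (𝟙 B)) (P.delta B)) := by
      rw [P.map_map]
      exact P.map_congr (by rw [hm]; ext <;> simp) _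
    have c2 : P.map (m ≫ prod.lift ((prod.fst : (B ⨯ B) ⨯ B ⟶ B ⨯ B) ≫ prod.fst) prod.snd)
        (P.delta B)
        = P.map (prod.lift (prod.fst ≫ prod.fst) prod.snd)
            (P.map (prod.map f (𝟙 B)) (P.delta B)) := by
      rw [P.map_map]
      exact P.map_congr (by rw [hm]; ext <;> simp) _
    have c3 : P.map (m ≫ prod.lift ((prod.fst : (B ⨯ B) ⨯ B ⟶ B ⨯ B) ≫ prod.snd) prod.snd)
        (P.delta B)
        = P.map (prod.lift (prod.fst ≫ prod.snd) prod.snd) (P.delta B) :=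
      P.map_congr (by rw [hm]; ext <;> simp) _
    rw [c1, c2, c3] at h
    exact h
  · -- (v): totality
    rw [← P.graph_eq f, ← P.ex_comp_eq]
    have e : prod.lift (𝟙 A) f ≫ prod.fst = 𝟙 A := by simp [prod.lift_fst, prod.lift_snd, prod.lift_fst_assoc, prod.lift_snd_assoc]
    rw [e, P.ex_id]
    exact le_top

lemma graph_comp {A B D : C} (f : A ⟶ B) (g : B ⟶ D) :
    P.ex (prod.lift (𝟙 A) (f ≫ g)) (⊤ : P.obj A) =
      P.comp (P.ex (prod.lift (𝟙 A) f) (⊤ : P.obj A))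
        (P.ex (prod.lift (𝟙 B) g) (⊤ : P.obj B)) := by
  rw [P.graph_eq, P.graph_eq, P.graph_eq]
  unfold EED.comp
  set q : (A ⨯ B) ⨯ D ⟶ A ⨯ D := prod.lift (prod.fst ≫ prod.fst) prod.snd with hq
  apply le_antisymm
  · -- factor through the section `s : A×D → (A×B)×D`, `(a,d) ↦ ((a,fa),d)`
    set s : A ⨯ D ⟶ (A ⨯ B) ⨯ D :=
      prod.lift (prod.lift prod.fst (prod.fst ≫ f)) prod.snd with hs
    have hsq : s ≫ q = 𝟙 (A ⨯ D) := by rw [hs, hq]; ext <;> simp [prod.lift_fst, prod.lift_snd, prod.lift_fst_assoc, prod.lift_snd_assoc]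
    have step : P.map (prod.map (f ≫ g) (𝟙 D)) (P.delta D) ≤
        P.map s (P.map prod.fst (P.map (prod.map f (𝟙 B)) (P.delta B)) ⊓
          P.map (prod.lift (prod.fst ≫ prod.snd) prod.snd)
            (P.map (prod.map g (𝟙 D)) (P.delta D))) := by
      rw [P.map_inf, P.map_map, P.map_map, P.map_map, P.map_map]
      refine le_inf ?_ ?_
      · have c : P.map ((s ≫ prod.fst) ≫ prod.map f (𝟙 B)) (P.delta B)
            = P.map ((prod.fst ≫ f) ≫ diag B) (P.delta B) :=
          P.map_congr (by rw [hs]; ext <;> simp [prod.lift_fst, prod.lift_snd, prod.lift_fst_assoc, prod.lift_snd_assoc]) _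
        rw [c]
        exact le_top.trans (P.top_le_comp_diag (prod.fst ≫ f))
      · refine le_of_eq (P.map_congr ?_ _)
        rw [hs]; ext <;> simp [prod.lift_fst, prod.lift_snd, prod.lift_fst_assoc, prod.lift_snd_assoc]
    calc P.map (prod.map (f ≫ g) (𝟙 D)) (P.delta D)
        = P.ex (𝟙 (A ⨯ D)) (P.map (prod.map (f ≫ g) (𝟙 D)) (P.delta D)) := (P.ex_id _).symm
      _ = P.ex (s ≫ q) (P.map (prod.map (f ≫ g) (𝟙 D)) (P.delta D)) := by rw [hsq]
      _ = P.ex q (P.ex s (P.map (prod.map (f ≫ g) (𝟙 D)) (P.delta D))) := P.ex_comp_eq s q _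
      _ ≤ P.ex q _ := P.ex_mono q (P.ex_le s step)
  · refine P.ex_le q ?_
    -- pull back transitivity of `δ_D` along `m : (A×B)×D → (D×D)×D`
    set m : (A ⨯ B) ⨯ D ⟶ (D ⨯ D) ⨯ D :=
      prod.lift (prod.lift (prod.fst ≫ prod.fst ≫ f ≫ g) (prod.fst ≫ prod.snd ≫ g))
        prod.snd with hm
    have h := P.map_mono m (P.delta_trans D)
    rw [P.map_inf, P.map_map, P.map_map, P.map_map] at h
    have c1 : P.map (m ≫ (prod.fst : (D ⨯ D) ⨯ D ⟶ D ⨯ D)) (P.delta D)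
        = P.map (prod.lift (prod.fst ≫ prod.fst ≫ f) (prod.fst ≫ prod.snd))
            (P.map (prod.map g g) (P.delta D)) := by
      rw [P.map_map]
      exact P.map_congr (by rw [hm]; ext <;> simp [prod.lift_fst, prod.lift_snd, prod.lift_fst_assoc, prod.lift_snd_assoc]) _
    have c2 : P.map (m ≫ prod.lift ((prod.fst : (D ⨯ D) ⨯ D ⟶ D ⨯ D) ≫ prod.snd) prod.snd)
        (P.delta D)
        = P.map (prod.lift (prod.fst ≫ prod.snd) prod.snd)
            (P.map (prod.map g (𝟙 D)) (P.delta D)) := by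
      rw [P.map_map]
      exact P.map_congr (by rw [hm]; ext <;> simp [prod.lift_fst, prod.lift_snd, prod.lift_fst_assoc, prod.lift_snd_assoc]) _
    have c3 : P.map (m ≫ prod.lift ((prod.fst : (D ⨯ D) ⨯ D ⟶ D ⨯ D) ≫ prod.fst) prod.snd)
        (P.delta D)
        = P.map q (P.map (prod.map (f ≫ g) (𝟙 D)) (P.delta D)) := by
      rw [P.map_map]
      exact P.map_congr (by rw [hm, hq]; ext <;> simp [prod.lift_fst, prod.lift_snd, prod.lift_fst_assoc, prod.lift_snd_assoc]) _
    rw [c1, c2, c3] at h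
    refine le_trans (inf_le_inf_right _ ?_) h
    -- `δ_B(fa,b) ≤ δ_D(gfa,gb)`
    have hb : P.map (prod.fst : (A ⨯ B) ⨯ D ⟶ A ⨯ B) (P.map (prod.map f (𝟙 B)) (P.delta B))
        = P.map (prod.lift (prod.fst ≫ prod.fst ≫ f) (prod.fst ≫ prod.snd)) (P.delta B) := by
      rw [P.map_map]
      exact P.map_congr (by ext <;> simp [prod.lift_fst, prod.lift_snd, prod.lift_fst_assoc, prod.lift_snd_assoc]) _
    rw [hb]
    exact P.map_mono _ (P.delta_congr g)

end EED

/-- `A ↦ (A, δ_A)`, `f ↦ ∃_{⟨id_A,f⟩}(⊤_A)` defines a functor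
`D : C → E_P` into the subcategory of the exact completion on
`P`-equivalence relations; moreover `∃_{⟨id_A,f⟩}(⊤_A) = P_{f×id_B}(δ_B)`. -/
theorem D_is_functor
    {C : Type u} [Category.{v} C] [HasBinaryProducts C] (P : EED.{u, v, w} C)
    {A B D : C} (f : A ⟶ B) (g : B ⟶ D) :
    P.ex (prod.lift (𝟙 A) f) (⊤ : P.obj A) = P.map (prod.map f (𝟙 B)) (P.delta B) ∧
    P.EqRel (P.delta A) ∧
    P.IsArrow (P.delta A) (P.delta B) (P.ex (prod.lift (𝟙 A) f) (⊤ : P.obj A)) ∧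
    P.ex (prod.lift (𝟙 A) (𝟙 A)) (⊤ : P.obj A) = P.delta A ∧
    P.ex (prod.lift (𝟙 A) (f ≫ g)) (⊤ : P.obj A) =
      P.comp (P.ex (prod.lift (𝟙 A) f) (⊤ : P.obj A))
        (P.ex (prod.lift (𝟙 B) g) (⊤ : P.obj B)) := by
  refine ⟨P.graph_eq f, P.delta_eqRel A, P.graph_isArrow f, ?_, P.graph_comp f g⟩
  rw [P.graph_eq (𝟙 A), prod.map_id_id, P.map_id]
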